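/- Soundness of the vertex elimination acyclicity encoding: if φ conjoined with the vertex elimination acyclicity constraints is satisfied by a model M, then the induced graph G_M is acyclic. -/

import Mathlib

/-- The vertex elimination sequence: `elimSeq E i` is the edge relation of the
graph `G_i` obtained from `G = G_0` by successively eliminating the vertices
`0, 1, ..., i-1` (the elimination ordering is the index order on `Fin n`).
Eliminating a vertex removes it and connects each of its in-neighbors to each
of its out-neighbors (no self-loops). -/
def elimSeq {n : ℕ} (E : Fin n → Fin n → Prop) : ℕ → Fin n → Fin n → Prop
  | 0 => E
  | (i+1) => fun j k =>
      j.val ≠ i ∧ k.val ≠ i ∧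
      (elimSeq E i j k ∨
        (j ≠ k ∧ ∃ m : Fin n, m.val = i ∧ elimSeq E i j m ∧ elimSeq E i m k))

/-- The vertex elimination graph `G*`: the union of all the `G_i`. -/
def estar {n : ℕ} (E : Fin n → Fin n → Prop) (j k : Fin n) : Prop :=
  ∃ i, elimSeq E i j k

/-- `tri E a b c` : the triangle recording that the edge `(a, c)` is created
while eliminating the (middle) vertex `b`. -/
def tri {n : ℕ} (E : Fin n → Fin n → Prop) (a b c : Fin n) : Prop :=
  a ≠ c ∧ elimSeq E b.val a b ∧ elimSeq E b.val b c

/-- A directed graph is acyclic iff no vertex lies on a nonempty closed walk. -/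
def Acyclic {n : ℕ} (E : Fin n → Fin n → Prop) : Prop :=
  ∀ v, ¬ Relation.TransGen E v v

/-- The graph `G_M` induced by a model `σ` via the edge variables `e`. -/
def modelGraph {n : ℕ} {Var : Type*} (E : Fin n → Fin n → Prop)
    (e : Fin n → Fin n → Var) (σ : Var → Prop) : Fin n → Fin n → Prop :=
  fun i j => E i j ∧ σ (e i j)

/-- Edge relation at stage `i` restricted to `e'`. -/
def Pe {n : ℕ} (E : Fin n → Fin n → Prop) (e' : Fin n → Fin n → Prop)
    (i : ℕ) (j k : Fin n) : Prop := elimSeq E i j k ∧ e' j k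

lemma elimSeq_ne {n : ℕ} (E : Fin n → Fin n → Prop) :
    ∀ i t, t < i → ∀ j k : Fin n, elimSeq E i j k → j.val ≠ t ∧ k.val ≠ t := by
  intro i
  induction i with
  | zero => intro t ht; omega
  | succ i ih =>
    intro t ht j k h
    obtain ⟨hj, hk, h⟩ := h
    rcases Nat.lt_succ_iff_lt_or_eq.mp ht with ht | rfl
    · rcases h with h | ⟨hne, m, hm, hjm, hmk⟩
      · exact ih t ht j k h
      · exact ⟨(ih t ht j m hjm).1, (ih t ht m k hmk).2⟩
    · exact ⟨hj, hk⟩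

lemma reduce {n : ℕ} (E : Fin n → Fin n → Prop) (e' : Fin n → Fin n → Prop)
    (h2 : ∀ i j, estar E i j → estar E j i → e' i j → ¬ e' j i)
    (h3 : ∀ a b c, tri E a b c → e' a b → e' b c → e' a c)
    (i : ℕ)
    (hnext : ∀ v, ¬ Relation.TransGen (Pe E e' (i+1)) v v) :
    ∀ v, ¬ Relation.TransGen (Pe E e' i) v v := by
  have contra2 : ∀ a b : Fin n, Pe E e' i a b → Pe E e' i b a → False := by
    intro a b ⟨ha1, ha2⟩ ⟨hb1, hb2⟩
    exact h2 a b ⟨i, ha1⟩ ⟨i, hb1⟩ ha2 hb2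
  have lift : ∀ a b : Fin n, Pe E e' i a b → a.val ≠ i → b.val ≠ i →
      Pe E e' (i+1) a b := by
    intro a b ⟨h, he⟩ ha hb
    exact ⟨⟨ha, hb, Or.inl h⟩, he⟩
  have uniq : ∀ a b : Fin n, a.val = i → b.val = i → a = b := by
    intro a b ha hb; exact Fin.ext (ha.trans hb.symm)
  have triStep : ∀ p a b : Fin n, p.val ≠ i → a.val = i → b.val ≠ i →
      Pe E e' i p a → Pe E e' i a b → Pe E e' (i+1) p b := by
    intro p a b hp ha hb hpa hab
    by_cases hpb : p = b
    · exact (contra2 p a hpa (hpb ▸ hab)).elim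
    · have htri : tri E p a b := by
        refine ⟨hpb, ?_, ?_⟩ <;> rw [ha]
        · exact hpa.1
        · exact hab.1
      have he : e' p b := h3 p a b htri hpa.2 hab.2
      exact ⟨⟨hp, hb, Or.inr ⟨hpb, a, ha, hpa.1, hab.1⟩⟩, he⟩
  have key : ∀ a b : Fin n, Relation.TransGen (Pe E e' i) a b → b.val ≠ i →
      ((a.val ≠ i → Relation.TransGen (Pe E e' (i+1)) a b) ∧
       (a.val = i → ∀ p : Fin n, p.val ≠ i → Pe E e' i p a →
          Relation.TransGen (Pe E e' (i+1)) p b)) := by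
    intro a b hab hb
    induction hab using Relation.TransGen.head_induction_on with
    | single h =>
      refine ⟨fun ha => .single (lift _ _ h ha hb), fun ha p hp hpa => ?_⟩
      exact .single (triStep p _ _ hp ha hb hpa h)
    | head hac hcb IH =>
      rename_i a c
      by_cases hc : c.val = i
      · refine ⟨fun ha => IH.2 hc a ha hac, fun ha p hp hpa => ?_⟩
        obtain rfl := uniq a c ha hc
        exact (contra2 a a hac hac).elim
      · refine ⟨fun ha => .head (lift a c hac ha hc) (IH.1 hc),
          fun ha p hp hpa => ?_⟩
        exact .head (triStep p a c hp ha hc hpa hac) (IH.1 hc)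
  intro v hv
  by_cases hvi : v.val = i
  · cases hv with
    | single h => exact contra2 v v h h
    | @tail w _ hvw hwv =>
      by_cases hwi : w.val = i
      · obtain rfl := uniq w v hwi hvi
        exact contra2 w w hwv hwv
      · exact hnext w ((key w w (Relation.TransGen.head hwv hvw) hwi).1 hwi)
  · exact hnext v ((key v v hv hvi).1 hvi)

lemma noCycle {n : ℕ} (E : Fin n → Fin n → Prop) (e' : Fin n → Fin n → Prop)
    (h2 : ∀ i j, estar E i j → estar E j i → e' i j → ¬ e' j i)
    (h3 : ∀ a b c, tri E a b c → e' a b → e' b c → e' a c) :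
    ∀ d i, n ≤ i + d → ∀ v, ¬ Relation.TransGen (Pe E e' i) v v := by
  intro d
  induction d with
  | zero =>
    intro i hi v hv
    cases hv with
    | single h => exact (elimSeq_ne E i v.val (by omega) v v h.1).1 rfl
    | @tail w _ hvw hwv => exact (elimSeq_ne E i w.val (by omega) w v hwv.1).1 rfl

  | succ d ih =>
    intro i hi
    exact reduce E e' h2 h3 i (ih (i+1) (by omega))

/-- soundness of the vertex elimination acyclicity encoding. -/
theorem stmt4 {n : ℕ} {Var : Type*} (E : Fin n → Fin n → Prop)
    (φ : (Var → Prop) → Prop) (e : Fin n → Fin n → Var)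
    (σ : Var → Prop) (e' : Fin n → Fin n → Prop)
    (hφ : φ σ)
    (h1 : ∀ i j, E i j → σ (e i j) → e' i j)
    (h2 : ∀ i j, estar E i j → estar E j i → e' i j → ¬ e' j i)
    (h3 : ∀ a b c, tri E a b c → e' a b → e' b c → e' a c) :
    Acyclic (modelGraph E e σ) := by
  intro v hv
  have hmono : ∀ a b, modelGraph E e σ a b → Pe E e' 0 a b := by
    intro a b ⟨hE, hσ⟩
    exact ⟨hE, h1 a b hE hσ⟩
  exact noCycle E e' h2 h3 n 0 (by omega) v
    (Relation.TransGen.mono hmono v v hv)
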